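/- If V satisfies the exact (undiscounted) self-consistency condition V(x) = max{h(x), V(f_π(x))} for all x, then the zero-sublevel set of V satisfies both constraint satisfaction and forward invariance, hence is a feasible region. -/
import Mathlib

/-- A solution of the exact self-consistency condition yields a zero-sublevel
set that satisfies constraint satisfaction, forward invariance, and hence is
a feasible region. -/
theorem exact_self_consistency_feasible {𝒳 : Type*} (fπ : 𝒳 → 𝒳)
    (h : 𝒳 → ℝ) (V : 𝒳 → ℝ)
    (hfix : ∀ x, V x = max (h x) (V (fπ x))) :
    (∀ x, V x ≤ 0 → h x ≤ 0) ∧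
    (∀ x, V x ≤ 0 → V (fπ x) ≤ 0) ∧
    (∀ x, V x ≤ 0 → ∀ t : ℕ, h (fπ^[t] x) ≤ 0) := by
  have hc : ∀ x, V x ≤ 0 → h x ≤ 0 := fun x hx =>
    le_trans (le_trans (le_max_left _ _) (hfix x).ge) hx
  have hi : ∀ x, V x ≤ 0 → V (fπ x) ≤ 0 := fun x hx =>
    le_trans (le_trans (le_max_right _ _) (hfix x).ge) hx
  refine ⟨hc, hi, fun x hx t => ?_⟩
  induction t generalizing x with
  | zero => exact hc x hx
  | succ n ih =>
    rw [Function.iterate_succ_apply]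
    exact ih _ (hi x hx)
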